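/- Let M1 = x_1,…,x_n and M2 = y_1,…,y_n be two sequences such that the symbols x_i are all distinct and the symbols y_j are all distinct, and let z_1, z_2 be two distinct symbols different from all x_i and y_j. Let T1 be the binary evolutionary tree formed from a path u_1,…,u_{n+1} rooted at u_1 by attaching a leaf labeled x_i to u_i for each i ∈ [1,n] and attaching two leaves labeled z_1 and z_2 to u_{n+1}; let T2 be formed symmetrically from a path v_1,…,v_{n+1} with leaf labels y_1,…,y_n, z_1, z_2. Then there is a one-to-one onto correspondence between the longest common subsequences of M1 and M2 and the maximum agreement subtrees of T1 and T2; in particular, rr(T1,T2) equals the length of a longest common subsequence of M1 and M2 plus 2. -/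

import Mathlib

/-- A leaf-labeled rooted tree: either a labeled leaf, or an internal
vertex with a list of subtrees. -/
inductive ETree (L : Type) : Type where
  | leaf : L → ETree L
  | node : List (ETree L) → ETree L

namespace ETree

variable {L : Type} [DecidableEq L]

/-- The list of leaf labels of a tree. -/
def labelList : ETree L → List L
  | leaf a => [a]
  | node ts => ts.attach.flatMap fun ⟨t, _⟩ => labelList t

/-- The label set of a tree: the set of its leaf labels. -/
def labelSet (t : ETree L) : Finset L := (labelList t).toFinset

/-- The list of children (as subtrees) of the root of a tree. -/
def children : ETree L → List (ETree L)
  | leaf _ => []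
  | node ts => ts

/-- A rooted tree is homeomorphic if every internal vertex has at least two children. -/
inductive Homeo : ETree L → Prop where
  | leaf (a : L) : Homeo (leaf a)
  | node (ts : List (ETree L)) (hlen : 2 ≤ ts.length) (h : ∀ t ∈ ts, Homeo t) :
      Homeo (node ts)

/-- An evolutionary tree: a homeomorphic rooted tree whose leaves carry distinct labels. -/
def IsEvolutionary (t : ETree L) : Prop := Homeo t ∧ (labelList t).Nodup

/-- `restrict t s` is the homeomorphic version `t‖s` of the tree obtained from `t` by
deleting all leaves with labels outside `s` (contracting away all vertices that are
not leaves or lowest common ancestors of two leaves); `none` if nothing remains. -/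
def restrict : ETree L → Finset L → Option (ETree L)
  | leaf a, s => if a ∈ s then some (leaf a) else none
  | node ts, s =>
      match ts.attach.filterMap (fun ⟨t, _⟩ => restrict t s) with
      | [] => none
      | [u] => some u
      | us => some (node us)

/-- Label-preserving isomorphism of leaf-labeled rooted trees. -/
inductive Iso : ETree L → ETree L → Prop where
  | leaf (a : L) : Iso (leaf a) (leaf a)
  | node (ts us : List (ETree L)) (e : Fin ts.length ≃ Fin us.length)
      (h : ∀ i : Fin ts.length, Iso (ts.get i) (us.get (e i))) :
      Iso (node ts) (node us)

/-- Isomorphism of possibly-empty trees. -/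
def IsoO : Option (ETree L) → Option (ETree L) → Prop
  | none, none => True
  | some t, some u => Iso t u
  | _, _ => False

/-- `rr T₁ T₂`: the number of leaves in a maximum agreement subtree of `T₁` and `T₂`,
i.e. the maximum cardinality of a subset `s` of the common labels such that `T₁‖s`
and `T₂‖s` are label-preservingly isomorphic. -/
noncomputable def rr (t₁ t₂ : ETree L) : ℕ :=
  sSup {k | ∃ s : Finset L, s ⊆ labelSet t₁ ∩ labelSet t₂ ∧ s.card = k ∧
    IsoO (restrict t₁ s) (restrict t₂ s)}

end ETree

namespace ETree

/-- `buildTree z₁ z₂ [a₁,…,a_n]` is the binary evolutionary tree formed from a path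
`u₁,…,u_{n+1}` rooted at `u₁` by attaching a leaf labeled `aᵢ` to `uᵢ` for each
`i ∈ [1,n]` and attaching two leaves labeled `z₁` and `z₂` to `u_{n+1}`. -/
def buildTree {L : Type} (z₁ z₂ : L) : List L → ETree L
  | [] => node [leaf z₁, leaf z₂]
  | a :: rest => node [leaf a, buildTree z₁ z₂ rest]

end ETree

-- development below
namespace ETree
variable {L : Type} [DecidableEq L]

lemma flatMap_attach' {α β : Type} (l : List α) (g : α → List β) :
    l.attach.flatMap (fun x => g x.1) = l.flatMap g := by
  induction l with
  | nil => simp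
  | cons a t ih => simp [List.attach_cons, List.flatMap_map, ih]

lemma filterMap_attach' {α β : Type} (l : List α) (f : α → Option β) :
    l.attach.filterMap (fun x => f x.1) = l.filterMap f := by
  induction l with
  | nil => simp
  | cons a t ih => simp [List.attach_cons, List.filterMap_cons, List.filterMap_map, ih]

lemma labelList_node (ts : List (ETree L)) : labelList (node ts) = ts.flatMap labelList := by
  rw [labelList]
  exact flatMap_attach' ts labelList

lemma labelList_buildTree (z₁ z₂ : L) (M : List L) :
    labelList (buildTree z₁ z₂ M) = M ++ [z₁, z₂] := by
  induction M with
  | nil => simp [buildTree, labelList_node, labelList]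
  | cons a r ih => simp [buildTree, labelList_node, labelList, ih]

lemma restrict_node (ts : List (ETree L)) (s : Finset L) :
    restrict (node ts) s = match ts.filterMap (restrict · s) with
      | [] => none
      | [u] => some u
      | us => some (node us) := by
  rw [restrict]
  exact congrArg (fun l => match l with
    | [] => none
    | [u] => some u
    | us => some (node us)) (filterMap_attach' ts (restrict · s))

lemma restrict_leaf (a : L) (s : Finset L) :
    restrict (leaf a) s = if a ∈ s then some (leaf a) else none := by rw [restrict]

def cat1 (a : L) : List L → ETree L
  | [] => leaf a
  | b :: r => node [leaf a, cat1 b r]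

def catO : List L → Option (ETree L)
  | [] => none
  | a :: r => some (cat1 a r)

end ETree

namespace ETree
variable {L : Type} [DecidableEq L]

lemma iso_cat1_self (a : L) (l : List L) : Iso (cat1 a l) (cat1 a l) := by
  induction l generalizing a with
  | nil => exact .leaf a
  | cons b r ih =>
    refine .node [leaf a, cat1 b r] [leaf a, cat1 b r] (Equiv.refl _) fun i => ?_
    match i with
    | ⟨0, _⟩ => exact .leaf a
    | ⟨1, _⟩ => exact ih b

lemma isoO_catO_self (w : List L) : IsoO (catO w) (catO w) := by
  cases w with
  | nil => trivial
  | cons a r => exact iso_cat1_self a r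

lemma iso_leaf_right {a : L} {t : ETree L} (h : Iso t (leaf a)) : t = leaf a := by
  cases h; rfl

lemma iso_leaf_left {a : L} {t : ETree L} (h : Iso (leaf a) t) : t = leaf a := by
  cases h; rfl

lemma cat1_eq_leaf {a b : L} {m : List L} (h : cat1 b m = leaf a) : b = a ∧ m = [] := by
  cases m with
  | nil => simpa [cat1] using h
  | cons c r => simp [cat1] at h

lemma iso_node2 {t1 t2 u1 u2 : ETree L} (h : Iso (node [t1, t2]) (node [u1, u2])) :
    (Iso t1 u1 ∧ Iso t2 u2) ∨ (Iso t1 u2 ∧ Iso t2 u1) := by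
  cases h with
  | node _ _ e hh =>
    have h0 := hh ⟨0, by simp⟩
    have h1 := hh ⟨1, by simp⟩
    by_cases h00 : (e ⟨0, by simp⟩ : Fin _).val = 0
    · have e0 : e ⟨0, by simp⟩ = ⟨0, by simp⟩ := Fin.ext h00
      have ne : e ⟨1, by simp⟩ ≠ e ⟨0, by simp⟩ := by
        intro hc
        exact absurd (e.injective hc) (by simp)
      have e1 : e ⟨1, by simp⟩ = ⟨1, by simp⟩ := by
        have hlt : (e ⟨1, by simp⟩).val < 2 := by simpa using (e ⟨1, by simp⟩).isLt
        rw [e0] at ne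
        have hne : (e ⟨1, by simp⟩).val ≠ 0 := fun hc => ne (Fin.ext (by simpa using hc))
        apply Fin.ext
        show (e ⟨1, by simp⟩).val = 1
        omega
      rw [e0] at h0; rw [e1] at h1
      exact Or.inl ⟨h0, h1⟩
    · have e0 : e ⟨0, by simp⟩ = ⟨1, by simp⟩ := by
        have hlt : (e ⟨0, by simp⟩).val < 2 := by simpa using (e ⟨0, by simp⟩).isLt
        apply Fin.ext
        show (e ⟨0, by simp⟩).val = 1
        omega
      have ne : e ⟨1, by simp⟩ ≠ e ⟨0, by simp⟩ := by
        intro hc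
        exact absurd (e.injective hc) (by simp)
      have e1 : e ⟨1, by simp⟩ = ⟨0, by simp⟩ := by
        rw [e0] at ne
        have hlt : (e ⟨1, by simp⟩).val < 2 := by simpa using (e ⟨1, by simp⟩).isLt
        have hne : (e ⟨1, by simp⟩).val ≠ 1 := fun hc => ne (Fin.ext (by simpa using hc))
        apply Fin.ext
        show (e ⟨1, by simp⟩).val = 0
        omega
      rw [e0] at h0; rw [e1] at h1
      exact Or.inr ⟨h0, h1⟩

end ETree

namespace ETree
variable {L : Type} [DecidableEq L]

lemma iso_cat1_cases : ∀ (l : List L) (m : List L) (a b : L),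
    Iso (cat1 a l) (cat1 b m) →
    a :: l = b :: m ∨ ∃ p x y, a :: l = p ++ [x, y] ∧ b :: m = p ++ [y, x] := by
  intro l
  induction l with
  | nil =>
    intro m a b h
    cases m with
    | nil =>
      left
      have := iso_leaf_left h
      simp only [cat1] at this
      rw [(leaf.injEq _ _).mp this.symm]
    | cons c r =>
      exfalso
      have := iso_leaf_left h
      simp [cat1] at this
  | cons c l' ih =>
    intro m a b h
    cases m with
    | nil =>
      exfalso
      have := iso_leaf_right h
      simp [cat1] at this
    | cons d m' =>
      simp only [cat1] at h
      rcases iso_node2 h with ⟨hA, hB⟩ | ⟨hA, hB⟩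
      · have hab : a = b := by cases hA; rfl
        rcases ih m' c d hB with heq | ⟨p, x, y, hp1, hp2⟩
        · left; rw [hab, heq]
        · right
          exact ⟨a :: p, x, y, by rw [hp1]; rfl, by rw [hab, hp2]; rfl⟩
      · -- leaf a ≅ cat1 d m', cat1 c l' ≅ leaf b
        have h1 := cat1_eq_leaf (iso_leaf_left hA)
        have h2 := cat1_eq_leaf (iso_leaf_right hB)
        right
        exact ⟨[], a, c, by simp [h2.1, h2.2], by simp [h1.1, h1.2, h2.1]⟩
end ETree

namespace ETree
variable {L : Type} [DecidableEq L]

lemma restrict_buildTree (z₁ z₂ : L) (M : List L) (s : Finset L) :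
    restrict (buildTree z₁ z₂ M) s
      = catO ((M ++ [z₁, z₂]).filter (fun x => decide (x ∈ s))) := by
  induction M with
  | nil =>
    rw [buildTree, restrict_node]
    by_cases h1 : z₁ ∈ s <;> by_cases h2 : z₂ ∈ s <;>
      simp [restrict_leaf, h1, h2, List.filterMap_cons, List.filter, catO, cat1]
  | cons a r ih =>
    rw [buildTree, restrict_node]
    simp only [List.filterMap_cons, restrict_leaf, ih]
    have hsplit : (a :: r ++ [z₁, z₂]).filter (fun x => decide (x ∈ s))
        = (if a ∈ s then [a] else []) ++ (r ++ [z₁, z₂]).filter (fun x => decide (x ∈ s)) := by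
      by_cases ha : a ∈ s <;> simp [List.filter_cons, ha]
    rw [hsplit]
    rcases hw : (r ++ [z₁, z₂]).filter (fun x => decide (x ∈ s)) with - | ⟨b, v⟩ <;>
      by_cases ha : a ∈ s <;> simp [ha, catO, cat1]
end ETree

namespace ETree
variable {L : Type} [DecidableEq L]

lemma filter_mem_sublist_eq {l M : List L} (hM : M.Nodup) (hl : l.Sublist M) :
    M.filter (fun x => decide (x ∈ l)) = l := by
  induction hl with
  | slnil => rfl
  | @cons l₁ l₂ a h ih =>
    have hnd : l₂.Nodup := (List.nodup_cons.mp hM).2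
    have ha : a ∉ l₂ := (List.nodup_cons.mp hM).1
    have hal : a ∉ l₁ := fun hc => ha (h.subset hc)
    rw [List.filter_cons, if_neg (by simpa using hal)]
    exact ih hnd
  | @cons_cons l₁ l₂ a h ih =>
    have hnd : l₂.Nodup := (List.nodup_cons.mp hM).2
    have ha : a ∉ l₂ := (List.nodup_cons.mp hM).1
    have hcongr : List.filter (fun x => decide (x ∈ a :: l₁)) l₂
        = List.filter (fun x => decide (x ∈ l₁)) l₂ := by
      apply List.filter_congr
      intro x hx
      have hxa : x ≠ a := fun hc => ha (hc ▸ hx)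
      simp [List.mem_cons, hxa]
    rw [List.filter_cons, if_pos (by simp), hcongr, ih hnd]

lemma length_filter_eq_card {M : List L} {s : Finset L} (hM : M.Nodup)
    (hs : ∀ x ∈ s, x ∈ M) :
    (M.filter (fun x => decide (x ∈ s))).length = s.card := by
  have hnd : (M.filter (fun x => decide (x ∈ s))).Nodup := hM.filter _
  have : (M.filter (fun x => decide (x ∈ s))).toFinset = s := by
    ext x
    simp only [List.mem_toFinset, List.mem_filter, decide_eq_true_eq]
    exact ⟨fun h => h.2, fun h => ⟨hs x h, h⟩⟩
  have h2 := congrArg Finset.card this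
  rw [List.toFinset_card_of_nodup hnd] at h2
  exact h2
end ETree

namespace ETree
variable {L : Type} [DecidableEq L]

lemma forward_restrict (z₁ z₂ : L) {M : List L} (hd : M.Nodup)
    (hz₁ : z₁ ∉ M) (hz₂ : z₂ ∉ M) {l : List L} (hl : l.Sublist M) :
    restrict (buildTree z₁ z₂ M) ((l ++ [z₁, z₂]).toFinset) = catO (l ++ [z₁, z₂]) := by
  rw [restrict_buildTree]
  congr 1
  rw [List.filter_append]
  have h1 : M.filter (fun x => decide (x ∈ (l ++ [z₁, z₂]).toFinset)) = l := by
    rw [List.filter_congr (fun x hx => ?_)]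
    · exact filter_mem_sublist_eq hd hl
    · have hx1 : x ≠ z₁ := fun hc => hz₁ (hc ▸ hx)
      have hx2 : x ≠ z₂ := fun hc => hz₂ (hc ▸ hx)
      simp [hx1, hx2]
  have h2 : [z₁, z₂].filter (fun x => decide (x ∈ (l ++ [z₁, z₂]).toFinset)) = [z₁, z₂] := by
    simp
  rw [h1, h2]

lemma forward_card (z₁ z₂ : L) (hz : z₁ ≠ z₂) {M : List L} (hd : M.Nodup)
    (hz₁ : z₁ ∉ M) (hz₂ : z₂ ∉ M) {l : List L} (hl : l.Sublist M) :
    ((l ++ [z₁, z₂]).toFinset).card = l.length + 2 := by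
  have hln : l.Nodup := hd.sublist hl
  have h1 : z₁ ∉ l := fun hc => hz₁ (hl.subset hc)
  have h2 : z₂ ∉ l := fun hc => hz₂ (hl.subset hc)
  have hnd : (l ++ [z₁, z₂]).Nodup := by
    simp [List.nodup_append, hln, hz, h1, h2]
    intro a ha; exact ⟨fun hc => h1 (hc ▸ ha), fun hc => h2 (hc ▸ ha)⟩
  rw [List.toFinset_card_of_nodup hnd]
  simp

lemma key_cases (z₁ z₂ : L) (hz : z₁ ≠ z₂) {M₁ M₂ : List L}
    (hd₁ : M₁.Nodup) (hd₂ : M₂.Nodup)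
    (hz₁₁ : z₁ ∉ M₁) (hz₁₂ : z₁ ∉ M₂) (hz₂₁ : z₂ ∉ M₁) (hz₂₂ : z₂ ∉ M₂)
    {s : Finset L}
    (hsub : s ⊆ labelSet (buildTree z₁ z₂ M₁) ∩ labelSet (buildTree z₁ z₂ M₂))
    (hiso : IsoO (restrict (buildTree z₁ z₂ M₁) s) (restrict (buildTree z₁ z₂ M₂) s)) :
    (z₁ ∈ s ∧ z₂ ∈ s ∧
      M₁.filter (fun x => decide (x ∈ s)) = M₂.filter (fun x => decide (x ∈ s)) ∧
      s.card = (M₁.filter (fun x => decide (x ∈ s))).length + 2 ∧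
      s = (M₁.filter (fun x => decide (x ∈ s)) ++ [z₁, z₂]).toFinset) ∨
    (∃ l : List L, l.Sublist M₁ ∧ l.Sublist M₂ ∧ s.card ≤ l.length + 1) := by
  classical
  set c₁ := M₁.filter (fun x => decide (x ∈ s)) with hc₁
  set c₂ := M₂.filter (fun x => decide (x ∈ s)) with hc₂
  set t := [z₁, z₂].filter (fun x => decide (x ∈ s)) with ht
  have hnd₁ : (M₁ ++ [z₁, z₂]).Nodup := by
    simp [List.nodup_append, hd₁, hz, hz₁₁, hz₂₁]
    intro a ha; exact ⟨fun hc => hz₁₁ (hc ▸ ha), fun hc => hz₂₁ (hc ▸ ha)⟩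
  have hnd₂ : (M₂ ++ [z₁, z₂]).Nodup := by
    simp [List.nodup_append, hd₂, hz, hz₁₂, hz₂₂]
    intro a ha; exact ⟨fun hc => hz₁₂ (hc ▸ ha), fun hc => hz₂₂ (hc ▸ ha)⟩
  have hs₁ : ∀ x ∈ s, x ∈ M₁ ++ [z₁, z₂] := by
    intro x hx
    have := hsub hx
    rw [Finset.mem_inter] at this
    have := this.1
    rw [labelSet, labelList_buildTree, List.mem_toFinset] at this
    exact this
  have hs₂ : ∀ x ∈ s, x ∈ M₂ ++ [z₁, z₂] := by
    intro x hx
    have := hsub hx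
    rw [Finset.mem_inter] at this
    have := this.2
    rw [labelSet, labelList_buildTree, List.mem_toFinset] at this
    exact this
  have hlen₁ : ((M₁ ++ [z₁, z₂]).filter (fun x => decide (x ∈ s))).length = s.card :=
    length_filter_eq_card hnd₁ hs₁
  have hlen₂ : ((M₂ ++ [z₁, z₂]).filter (fun x => decide (x ∈ s))).length = s.card :=
    length_filter_eq_card hnd₂ hs₂
  rw [restrict_buildTree, restrict_buildTree] at hiso
  rw [List.filter_append, ← hc₁, ← ht] at hiso hlen₁
  rw [List.filter_append, ← hc₂, ← ht] at hiso hlen₂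
  have hc₁M : c₁.Sublist M₁ := List.filter_sublist
  have hc₂M : c₂.Sublist M₂ := List.filter_sublist
  rcases hf₁ : c₁ ++ t with - | ⟨a, w₁⟩
  · rcases hf₂ : c₂ ++ t with - | ⟨b, w₂⟩
    · right
      refine ⟨[], List.nil_sublist _, List.nil_sublist _, ?_⟩
      rw [hf₁] at hlen₁
      simp at hlen₁
      omega
    · rw [hf₁, hf₂] at hiso
      exact absurd hiso (by simp [catO, IsoO])
  · rcases hf₂ : c₂ ++ t with - | ⟨b, w₂⟩
    · rw [hf₁, hf₂] at hiso
      exact absurd hiso (by simp [catO, IsoO])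
    · rw [hf₁, hf₂] at hiso
      have hiso' : Iso (cat1 a w₁) (cat1 b w₂) := hiso
      rcases iso_cat1_cases w₁ w₂ a b hiso' with heq | ⟨p, x, y, hp1, hp2⟩
      · -- c₁ ++ t = c₂ ++ t
        have hft : c₁ ++ t = c₂ ++ t := by rw [hf₁, hf₂, heq]
        have hcc : c₁ = c₂ := List.append_cancel_right hft
        by_cases h1 : z₁ ∈ s <;> by_cases h2 : z₂ ∈ s
        · left
          refine ⟨h1, h2, hcc, ?_, ?_⟩
          · have htv : t = [z₁, z₂] := by rw [ht]; simp [h1, h2]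
            rw [htv] at hlen₁
            simp at hlen₁
            omega
          · ext x
            rw [List.mem_toFinset, List.mem_append]
            constructor
            · intro hx
              rcases List.mem_append.mp (hs₁ x hx) with h | h
              · exact Or.inl (List.mem_filter.mpr ⟨h, by simpa using hx⟩)
              · exact Or.inr h
            · intro hx
              rcases hx with h | h
              · simpa using (List.mem_filter.mp h).2
              · rcases List.mem_cons.mp h with rfl | h
                · exact h1
                · simp only [List.mem_singleton] at h
                  exact h ▸ h2
        all_goals
          right
          refine ⟨c₁, hc₁M, hcc ▸ hc₂M, ?_⟩
          have htl : t.length ≤ 1 := by rw [ht]; simp [h1, h2]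
          rw [List.length_append] at hlen₁
          omega
      · -- swap case
        have hq₁ : c₁ ++ t = p ++ [x, y] := by rw [hf₁, hp1]
        have hq₂ : c₂ ++ t = p ++ [y, x] := by rw [hf₂, hp2]
        by_cases h1 : z₁ ∈ s <;> by_cases h2 : z₂ ∈ s
        · -- t = [z₁,z₂]: contradiction z₁ = z₂
          exfalso
          have htv : t = [z₁, z₂] := by rw [ht]; simp [h1, h2]
          rw [htv] at hq₁ hq₂
          obtain ⟨hA, hB⟩ := List.append_inj' hq₁ (by simp)
          obtain ⟨hC, hD⟩ := List.append_inj' hq₂ (by simp)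
          rw [List.cons.injEq] at hB hD
          -- hB : z₁ = x ∧ [z₂] = [y]; hD : z₁ = y ∧ [z₂] = [x]
          have hx1 : x = z₁ := hB.1.symm
          have hy2 : y = z₂ := by simpa using hB.2.symm
          have hy1 : y = z₁ := hD.1.symm
          exact hz (hy1 ▸ hy2 ▸ rfl)
        · -- t = [z₁]
          exfalso
          have htv : t = [z₁] := by rw [ht]; simp [h1, h2]
          rw [htv] at hq₁ hq₂
          have hq₁' : c₁ ++ [z₁] = (p ++ [x]) ++ [y] := by rw [hq₁]; simp
          have hq₂' : c₂ ++ [z₁] = (p ++ [y]) ++ [x] := by rw [hq₂]; simp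
          obtain ⟨hA, hB⟩ := List.append_inj' hq₁' (by simp)
          obtain ⟨hC, hD⟩ := List.append_inj' hq₂' (by simp)
          have hxz : x = z₁ := by simpa using hD.symm
          have hxm : x ∈ M₁ := hc₁M.subset (by rw [hA]; simp)
          exact hz₁₁ (hxz ▸ hxm)
        · -- t = [z₂]
          exfalso
          have htv : t = [z₂] := by rw [ht]; simp [h1, h2]
          rw [htv] at hq₁ hq₂
          have hq₁' : c₁ ++ [z₂] = (p ++ [x]) ++ [y] := by rw [hq₁]; simp
          have hq₂' : c₂ ++ [z₂] = (p ++ [y]) ++ [x] := by rw [hq₂]; simp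
          obtain ⟨hA, hB⟩ := List.append_inj' hq₁' (by simp)
          obtain ⟨hC, hD⟩ := List.append_inj' hq₂' (by simp)
          have hxz : x = z₂ := by simpa using hD.symm
          have hxm : x ∈ M₁ := hc₁M.subset (by rw [hA]; simp)
          exact hz₂₁ (hxz ▸ hxm)
        · -- t = []
          have htv : t = [] := by rw [ht]; simp [h1, h2]
          rw [htv, List.append_nil] at hq₁ hq₂
          right
          refine ⟨p ++ [x], ?_, ?_, ?_⟩
          · refine List.Sublist.trans ?_ hc₁M
            rw [hq₁]
            rw [show p ++ [x, y] = p ++ ([x] ++ [y]) from by simp, ← List.append_assoc]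
            exact List.sublist_append_left _ _
          · refine List.Sublist.trans ?_ hc₂M
            rw [hq₂]
            exact (List.append_sublist_append_left p).mpr (List.sublist_cons_self y [x])
          · rw [htv, List.append_nil] at hlen₁
            have : c₁.length = p.length + 2 := by rw [hq₁]; simp
            simp only [List.length_append, List.length_cons, List.length_nil]
            omega
end ETree

namespace ETree
variable {L : Type} [DecidableEq L]

lemma forward_filter (z₁ z₂ : L) {M : List L} (hd : M.Nodup)
    (hz₁ : z₁ ∉ M) (hz₂ : z₂ ∉ M) {l : List L} (hl : l.Sublist M) :
    M.filter (fun x => decide (x ∈ (l ++ [z₁, z₂]).toFinset)) = l := by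
  rw [List.filter_congr (fun x hx => ?_)]
  · exact filter_mem_sublist_eq hd hl
  · have hx1 : x ≠ z₁ := fun hc => hz₁ (hc ▸ hx)
    have hx2 : x ≠ z₂ := fun hc => hz₂ (hc ▸ hx)
    simp [hx1, hx2]

lemma forward_subset (z₁ z₂ : L) {M : List L} {l : List L} (hl : l.Sublist M) :
    (l ++ [z₁, z₂]).toFinset ⊆ labelSet (buildTree z₁ z₂ M) := by
  intro x hx
  rw [labelSet, labelList_buildTree, List.mem_toFinset]
  rw [List.mem_toFinset, List.mem_append] at hx
  rcases hx with h | h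
  · exact List.mem_append_left _ (hl.subset h)
  · exact List.mem_append_right _ h
end ETree


open ETree in
/-- Let `M₁` and `M₂` be two sequences of length `n` of distinct
symbols, and `z₁ ≠ z₂` two further symbols occurring in neither sequence.  Let `T₁` and
`T₂` be the binary evolutionary trees built from `M₁` and `M₂` as above.  Then there is
a one-to-one onto correspondence between the longest common subsequences of `M₁` and
`M₂` and the maximum agreement subtrees of `T₁` and `T₂` (the latter identified with
the maximum-cardinality agreeing label sets); in particular `rr(T₁,T₂)` equals the
length of a longest common subsequence of `M₁` and `M₂` plus `2`. -/
theorem lcs_mast_correspondence {L : Type} [DecidableEq L] (n : ℕ) (M₁ M₂ : List L)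
    (h₁ : M₁.length = n) (h₂ : M₂.length = n) (hd₁ : M₁.Nodup) (hd₂ : M₂.Nodup)
    (z₁ z₂ : L) (hz : z₁ ≠ z₂)
    (hz₁₁ : z₁ ∉ M₁) (hz₁₂ : z₁ ∉ M₂) (hz₂₁ : z₂ ∉ M₁) (hz₂₂ : z₂ ∉ M₂) :
    Nonempty
      ({l : List L // l.Sublist M₁ ∧ l.Sublist M₂ ∧
          ∀ l' : List L, l'.Sublist M₁ → l'.Sublist M₂ → l'.length ≤ l.length} ≃
       {s : Finset L // s ⊆ labelSet (buildTree z₁ z₂ M₁) ∩ labelSet (buildTree z₁ z₂ M₂) ∧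
          IsoO (restrict (buildTree z₁ z₂ M₁) s) (restrict (buildTree z₁ z₂ M₂) s) ∧
          s.card = rr (buildTree z₁ z₂ M₁) (buildTree z₁ z₂ M₂)}) ∧
    rr (buildTree z₁ z₂ M₁) (buildTree z₁ z₂ M₂) =
      sSup {k | ∃ l : List L, l.Sublist M₁ ∧ l.Sublist M₂ ∧ l.length = k} + 2 := by
  classical
  set Lset := {k | ∃ l : List L, l.Sublist M₁ ∧ l.Sublist M₂ ∧ l.length = k} with hLset
  have hL0 : 0 ∈ Lset := ⟨[], List.nil_sublist _, List.nil_sublist _, rfl⟩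
  have hLbdd : BddAbove Lset := by
    refine ⟨n, ?_⟩
    rintro k ⟨l, hl₁, -, hlen⟩
    rw [← hlen, ← h₁]
    exact hl₁.length_le
  obtain ⟨l₀, hl₀₁, hl₀₂, hl₀len⟩ := Nat.sSup_mem ⟨0, hL0⟩ hLbdd
  set N := sSup Lset with hN
  have hmaxlen : ∀ l : List L, l.Sublist M₁ → l.Sublist M₂ → l.length ≤ N :=
    fun l a b => le_csSup hLbdd ⟨l, a, b, rfl⟩
  have hK : IsGreatest {k | ∃ s : Finset L,
      s ⊆ labelSet (buildTree z₁ z₂ M₁) ∩ labelSet (buildTree z₁ z₂ M₂) ∧ s.card = k ∧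
      IsoO (restrict (buildTree z₁ z₂ M₁) s) (restrict (buildTree z₁ z₂ M₂) s)} (N + 2) := by
    constructor
    · refine ⟨(l₀ ++ [z₁, z₂]).toFinset,
        Finset.subset_inter (forward_subset z₁ z₂ hl₀₁) (forward_subset z₁ z₂ hl₀₂), ?_, ?_⟩
      · rw [forward_card z₁ z₂ hz hd₁ hz₁₁ hz₂₁ hl₀₁, hl₀len]
      · rw [forward_restrict z₁ z₂ hd₁ hz₁₁ hz₂₁ hl₀₁,
          forward_restrict z₁ z₂ hd₂ hz₁₂ hz₂₂ hl₀₂]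
        exact isoO_catO_self _
    · rintro k ⟨s, hsub, rfl, hiso⟩
      rcases key_cases z₁ z₂ hz hd₁ hd₂ hz₁₁ hz₁₂ hz₂₁ hz₂₂ hsub hiso with
        ⟨hq1, hq2, hcc, hcard, hseq⟩ | ⟨l, hl₁, hl₂, hle⟩
      · have := hmaxlen _ (List.filter_sublist : List.Sublist (M₁.filter (fun x => decide (x ∈ s))) M₁)
          (by rw [hcc]; exact List.filter_sublist)
        omega
      · have := hmaxlen l hl₁ hl₂
        omega
  have hrr : rr (buildTree z₁ z₂ M₁) (buildTree z₁ z₂ M₂) = N + 2 := by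
    rw [rr]
    exact hK.csSup_eq
  refine ⟨⟨?_⟩, hrr⟩
  refine
    { toFun := fun x => ⟨(x.1 ++ [z₁, z₂]).toFinset, ?_, ?_, ?_⟩
      invFun := fun y => ⟨M₁.filter (fun a => decide (a ∈ y.1)), ?_, ?_, ?_⟩
      left_inv := ?_
      right_inv := ?_ }
  · exact Finset.subset_inter (forward_subset z₁ z₂ x.2.1) (forward_subset z₁ z₂ x.2.2.1)
  · rw [forward_restrict z₁ z₂ hd₁ hz₁₁ hz₂₁ x.2.1,
      forward_restrict z₁ z₂ hd₂ hz₁₂ hz₂₂ x.2.2.1]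
    exact isoO_catO_self _
  · rw [forward_card z₁ z₂ hz hd₁ hz₁₁ hz₂₁ x.2.1, hrr]
    have hx1 : x.1.length ≤ N := hmaxlen _ x.2.1 x.2.2.1
    have hx2 : N ≤ x.1.length := hl₀len ▸ x.2.2.2 l₀ hl₀₁ hl₀₂
    omega
  · exact List.filter_sublist
  · rcases key_cases z₁ z₂ hz hd₁ hd₂ hz₁₁ hz₁₂ hz₂₁ hz₂₂ y.2.1 y.2.2.1 with
      ⟨hq1, hq2, hcc, hcard, hseq⟩ | ⟨l, hl₁, hl₂, hle⟩
    · rw [hcc]; exact List.filter_sublist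
    · exfalso
      have h3 := hmaxlen l hl₁ hl₂
      have h4 := (y.2.2.2).trans hrr
      omega
  · intro l' hl'₁ hl'₂
    rcases key_cases z₁ z₂ hz hd₁ hd₂ hz₁₁ hz₁₂ hz₂₁ hz₂₂ y.2.1 y.2.2.1 with
      ⟨hq1, hq2, hcc, hcard, hseq⟩ | ⟨l, hl₁, hl₂, hle⟩
    · have h3 := hmaxlen l' hl'₁ hl'₂
      have h4 := (y.2.2.2).trans hrr
      omega
    · exfalso
      have h3 := hmaxlen l hl₁ hl₂
      have h4 := (y.2.2.2).trans hrr
      omega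
  · intro x
    apply Subtype.ext
    exact forward_filter z₁ z₂ hd₁ hz₁₁ hz₂₁ x.2.1
  · intro y
    apply Subtype.ext
    rcases key_cases z₁ z₂ hz hd₁ hd₂ hz₁₁ hz₁₂ hz₂₁ hz₂₂ y.2.1 y.2.2.1 with
      ⟨hq1, hq2, hcc, hcard, hseq⟩ | ⟨l, hl₁, hl₂, hle⟩
    · exact hseq.symm
    · exfalso
      have h3 := hmaxlen l hl₁ hl₂
      have h4 := (y.2.2.2).trans hrr
      omega
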